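/- The quotient space X_S = S³ / ι is homeomorphic to Susp(ℝP²), the unreduced suspension of the real projective plane. -/

import Mathlib

/-- The unit 3-sphere in `EuclideanSpace ℝ (Fin 4)`. -/
abbrev S3 : Type := ↥(Metric.sphere (0 : EuclideanSpace ℝ (Fin 4)) 1)

/-- The involution `ι(x₁, x₂, x₃, x₄) = (−x₁, −x₂, −x₃, x₄)` on the unit 3-sphere. -/
noncomputable def sphereInv (x : S3) : S3 :=
  ⟨(WithLp.toLp 2 (fun i => if i = 3 then (x : EuclideanSpace ℝ (Fin 4)) i
      else -(x : EuclideanSpace ℝ (Fin 4)) i) : EuclideanSpace ℝ (Fin 4)), by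
    have hx := x.2
    rw [mem_sphere_zero_iff_norm] at hx ⊢
    rw [EuclideanSpace.norm_eq] at hx ⊢
    simpa [apply_ite (‖·‖)] using hx⟩

/-- The quotient space `X_S = S³ / ι`, i.e. the quotient of the 3-sphere by the
equivalence relation identifying each point `p` with `ι p`, with the quotient topology. -/
abbrev XS : Type := Quot (fun p q : S3 => sphereInv p = q)

/-- The unit 2-sphere in `EuclideanSpace ℝ (Fin 3)`. -/
abbrev S2 : Type := ↥(Metric.sphere (0 : EuclideanSpace ℝ (Fin 3)) 1)

/-- The real projective plane: the quotient of the unit 2-sphere by the equivalence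
relation identifying `x` with `−x`, with the quotient topology. -/
abbrev RP2 : Type :=
  Quot (fun x y : S2 => (y : EuclideanSpace ℝ (Fin 3)) = -(x : EuclideanSpace ℝ (Fin 3)))

/-- The unreduced suspension of a topological space `Z`: the quotient of `Z × [0,1]`
collapsing `Z × {0}` to a point and `Z × {1}` to a point, with the quotient topology. -/
abbrev Susp (Z : Type) [TopologicalSpace Z] : Type :=
  Quot (fun a b : Z × unitInterval => (a.2 = 0 ∧ b.2 = 0) ∨ (a.2 = 1 ∧ b.2 = 1))

noncomputable section AuxXS

open Finset

local notation "E4" => EuclideanSpace ℝ (Fin 4)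
local notation "E3" => EuclideanSpace ℝ (Fin 3)

lemma sum_sq_S2 (v : S2) : ∑ i, ((v : E3) i)^2 = 1 := by
  have hv := v.2
  rw [mem_sphere_zero_iff_norm, EuclideanSpace.norm_eq, Real.sqrt_eq_one] at hv
  simpa [Real.norm_eq_abs, sq_abs] using hv

lemma sum_sq_S3 (v : S3) : ∑ i, ((v : E4) i)^2 = 1 := by
  have hv := v.2
  rw [mem_sphere_zero_iff_norm, EuclideanSpace.norm_eq, Real.sqrt_eq_one] at hv
  simpa [Real.norm_eq_abs, sq_abs] using hv

def rad (t : ℝ) : ℝ := Real.sqrt (1 - (1 - 2*t)^2)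

lemma rad_sq (t : unitInterval) : rad t ^ 2 = 1 - (1 - 2*(t:ℝ))^2 := by
  have h1 := t.2.1; have h2 := t.2.2
  rw [rad, Real.sq_sqrt]; nlinarith

def fMap (v : S2) (t : unitInterval) : S3 :=
  ⟨WithLp.toLp 2 (Fin.snoc (fun j : Fin 3 => rad t * (v : E3) j) (1 - 2*(t:ℝ)) : Fin 4 → ℝ), by
    rw [mem_sphere_zero_iff_norm, EuclideanSpace.norm_eq, Real.sqrt_eq_one]
    have hn : ∀ i : Fin 4,
        ‖(Fin.snoc (fun j : Fin 3 => rad t * (v : E3) j) (1 - 2*(t:ℝ)) : Fin 4 → ℝ) i‖^2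
        = ((Fin.snoc (fun j : Fin 3 => rad t * (v : E3) j) (1 - 2*(t:ℝ)) : Fin 4 → ℝ) i)^2 :=
      fun i => by rw [Real.norm_eq_abs, sq_abs]
    calc (∑ i : Fin 4, ‖(Fin.snoc (fun j : Fin 3 => rad t * (v : E3) j) (1 - 2*(t:ℝ)) : Fin 4 → ℝ) i‖^2)
        = ∑ i : Fin 4, ((Fin.snoc (fun j : Fin 3 => rad t * (v : E3) j) (1 - 2*(t:ℝ)) : Fin 4 → ℝ) i)^2 :=
          Finset.sum_congr rfl fun i _ => hn i
      _ = 1 := by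
          rw [Fin.sum_univ_castSucc]
          simp only [Fin.snoc_castSucc, Fin.snoc_last]
          have h : ∑ j : Fin 3, (rad t * (v : E3) j)^2
              = rad t ^2 * ∑ j : Fin 3, ((v : E3) j)^2 := by
            rw [Finset.mul_sum]; exact Finset.sum_congr rfl fun j _ => by ring
          rw [h, sum_sq_S2, rad_sq]; ring⟩

lemma fMap_castSucc (v : S2) (t : unitInterval) (j : Fin 3) :
    (fMap v t : E4) j.castSucc = rad t * (v : E3) j := by
  simp only [fMap]; exact Fin.snoc_castSucc _ _ _

lemma fMap_last (v : S2) (t : unitInterval) :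
    (fMap v t : E4) (Fin.last 3) = 1 - 2*(t:ℝ) := by
  simp only [fMap]; exact Fin.snoc_last _ _

lemma sphereInv_coord (x : S3) (i : Fin 4) :
    (sphereInv x : E4) i = if i = 3 then (x : E4) i else -(x : E4) i := rfl

lemma castSucc_ne_three (j : Fin 3) : j.castSucc ≠ (3 : Fin 4) := by
  intro h
  have := congrArg Fin.val h
  simp [Fin.val_last] at this
  omega

lemma sphereInv_invol (x : S3) : sphereInv (sphereInv x) = x := by
  apply Subtype.ext
  refine PiLp.ext fun i => ?_
  rw [show ((sphereInv (sphereInv x) : E4) i) = _ from sphereInv_coord _ i, sphereInv_coord]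
  by_cases h : i = 3 <;> simp [h]

lemma fMap_neg (v w : S2) (hvw : (w : E3) = -(v : E3)) (t : unitInterval) :
    fMap w t = sphereInv (fMap v t) := by
  apply Subtype.ext
  refine PiLp.ext fun i => ?_
  rw [sphereInv_coord]
  refine Fin.lastCases ?_ ?_ i
  · rw [if_pos (show (Fin.last 3 : Fin 4) = 3 from rfl), fMap_last, fMap_last]
  · intro j
    rw [if_neg (castSucc_ne_three j), fMap_castSucc, fMap_castSucc]
    have : (w : E3) j = -((v : E3) j) := by rw [hvw]; rfl
    rw [this]; ring

lemma fMap_eq_of_rad_zero (v w : S2) (t : unitInterval) (h : rad t = 0) :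
    fMap v t = fMap w t := by
  apply Subtype.ext
  refine PiLp.ext fun i => ?_
  refine Fin.lastCases ?_ ?_ i
  · rw [fMap_last, fMap_last]
  · intro j
    rw [fMap_castSucc, fMap_castSucc, h, zero_mul, zero_mul]

/-- Extraction of the relation from equality in `XS`. -/
lemma xs_eq {x y : S3} (h : (Quot.mk _ x : XS) = Quot.mk _ y) :
    x = y ∨ sphereInv x = y := by
  have hinv : ∀ a b : S3, sphereInv a = b →
      ((a = y ∨ sphereInv a = y) = (b = y ∨ sphereInv b = y)) := by
    intro a b hab
    subst hab
    rw [sphereInv_invol]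
    exact propext or_comm
  have h2 := congrArg (Quot.lift (fun z : S3 => z = y ∨ sphereInv z = y) hinv) h
  exact cast h2.symm (Or.inl rfl)

/-- Gram-matrix rigidity: a vector is determined up to sign by pairwise products. -/
lemma gram_aux {n : ℕ} (a b : Fin n → ℝ) (h : ∀ i j, a i * a j = b i * b j) :
    a = b ∨ a = -b := by
  by_cases ha : ∀ k, a k = 0
  · left; funext k
    have hb : b k * b k = 0 := (h k k).symm.trans (by rw [ha k]; ring)
    have hb0 : b k = 0 := by nlinarith [hb]
    rw [ha k, hb0]
  · push_neg at ha
    obtain ⟨k, hk⟩ := ha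
    rcases mul_self_eq_mul_self_iff.mp (h k k) with hkb | hkb
    · left; funext j
      have hkj := h k j
      rw [hkb] at hkj hk
      exact mul_left_cancel₀ hk hkj
    · right; funext j
      have hkj := h k j
      rw [hkb] at hkj hk
      have hk' : b k ≠ 0 := fun h0 => hk (by rw [h0, neg_zero])
      have h2 : b k * (-(a j)) = b k * b j := by linarith [hkj]
      have h3 := mul_left_cancel₀ hk' h2
      show a j = -(b j)
      linarith [h3]

def phiHat (x : S3) : ℝ × (Fin 3 → Fin 3 → ℝ) :=
  ((x : E4) 3, fun i j => (x : E4) i.castSucc * (x : E4) j.castSucc)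

lemma phiHat_inv : ∀ a b : S3, sphereInv a = b → phiHat a = phiHat b := by
  intro a b hab
  subst hab
  unfold phiHat
  refine Prod.ext ?_ ?_
  · rw [sphereInv_coord, if_pos rfl]
  · funext i j
    simp only [sphereInv_coord, if_neg (castSucc_ne_three i), if_neg (castSucc_ne_three j)]
    ring

lemma phiHat_cont : Continuous phiHat := by
  unfold phiHat
  refine Continuous.prodMk ?_ (continuous_pi fun i => continuous_pi fun j => Continuous.mul ?_ ?_)
  · exact ((EuclideanSpace.proj (3 : Fin 4)).continuous).comp continuous_subtype_val
  · exact ((EuclideanSpace.proj (i.castSucc : Fin 4)).continuous).comp continuous_subtype_val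
  · exact ((EuclideanSpace.proj (j.castSucc : Fin 4)).continuous).comp continuous_subtype_val

lemma phi_inj (x y : S3) (h : phiHat x = phiHat y) : x = y ∨ sphereInv x = y := by
  have h3 : (x : E4) 3 = (y : E4) 3 := congrArg Prod.fst h
  have hg : ∀ i j : Fin 3,
      (x : E4) i.castSucc * (x : E4) j.castSucc = (y : E4) i.castSucc * (y : E4) j.castSucc :=
    fun i j => congr_fun (congr_fun (congrArg Prod.snd h) i) j
  rcases gram_aux (fun i => (x : E4) i.castSucc) (fun i => (y : E4) i.castSucc) hg with he | he
  · left
    apply Subtype.ext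
    refine PiLp.ext fun i => ?_
    refine Fin.lastCases ?_ ?_ i
    · exact h3
    · intro j
      exact congr_fun he j
  · right
    apply Subtype.ext
    refine PiLp.ext fun i => ?_
    rw [sphereInv_coord]
    refine Fin.lastCases ?_ ?_ i
    · rw [if_pos (show (Fin.last 3 : Fin 4) = 3 from rfl)]
      exact h3
    · intro j
      rw [if_neg (castSucc_ne_three j)]
      have := congr_fun he j
      simp only [Pi.neg_apply] at this
      rw [this]; ring

instance : T2Space XS := by
  constructor
  intro a b hab
  refine separated_by_continuous (f := Quot.lift phiHat phiHat_inv)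
    (continuous_quot_lift _ phiHat_cont) ?_
  intro h
  apply hab
  obtain ⟨x, rfl⟩ := Quot.exists_rep a
  obtain ⟨y, rfl⟩ := Quot.exists_rep b
  rcases phi_inj x y h with he | he
  · rw [he]
  · exact Quot.sound he

def psiHat (v : S2) : Fin 3 → Fin 3 → ℝ := fun i j => (v : E3) i * (v : E3) j

lemma psiHat_inv : ∀ a b : S2, (b : E3) = -(a : E3) → psiHat a = psiHat b := by
  intro a b hab
  funext i j
  unfold psiHat
  have h1 : (b : E3) i = -((a : E3) i) := by rw [hab]; rfl
  have h2 : (b : E3) j = -((a : E3) j) := by rw [hab]; rfl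
  rw [h1, h2]; ring

lemma psiHat_cont : Continuous psiHat := by
  unfold psiHat
  exact continuous_pi fun i => continuous_pi fun j => Continuous.mul
    (((EuclideanSpace.proj i).continuous).comp continuous_subtype_val)
    (((EuclideanSpace.proj j).continuous).comp continuous_subtype_val)

instance : T2Space RP2 := by
  constructor
  intro a b hab
  refine separated_by_continuous (f := Quot.lift psiHat psiHat_inv)
    (continuous_quot_lift _ psiHat_cont) ?_
  intro h
  apply hab
  obtain ⟨v, rfl⟩ := Quot.exists_rep a
  obtain ⟨w, rfl⟩ := Quot.exists_rep b
  have hg : ∀ i j : Fin 3, (v : E3) i * (v : E3) j = (w : E3) i * (w : E3) j :=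
    fun i j => congr_fun (congr_fun h i) j
  rcases gram_aux (fun i => (v : E3) i) (fun i => (w : E3) i) hg with he | he
  · have : v = w := Subtype.ext (PiLp.ext fun i => congr_fun he i)
    rw [this]
  · refine Quot.sound ?_
    refine PiLp.ext fun i => ?_
    have := congr_fun he i
    simp only [Pi.neg_apply] at this
    show (w : E3) i = -((v : E3) i)
    linarith [this]

lemma fMap_cont : Continuous (fun p : S2 × unitInterval => fMap p.1 p.2) := by
  apply Continuous.subtype_mk
  show Continuous (fun p : S2 × unitInterval =>
    (WithLp.equiv 2 (Fin 4 → ℝ)).symm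
      (Fin.snoc (fun j : Fin 3 => rad p.2 * (p.1 : E3) j) (1 - 2*((p.2:ℝ)))))
  apply (PiLp.continuous_toLp ..).comp
  apply continuous_pi
  intro i
  refine Fin.lastCases ?_ ?_ i
  · simp only [Fin.snoc_last]
    have : Continuous (fun p : S2 × unitInterval => (p.2 : ℝ)) :=
      continuous_subtype_val.comp continuous_snd
    fun_prop
  · intro j
    simp only [Fin.snoc_castSucc]
    have hc : Continuous (fun p : S2 × unitInterval => (p.2 : ℝ)) :=
      continuous_subtype_val.comp continuous_snd
    apply Continuous.mul
    · exact Real.continuous_sqrt.comp (by fun_prop)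
    · exact ((EuclideanSpace.proj j).continuous).comp (continuous_subtype_val.comp continuous_fst)

def qk : S2 × unitInterval → RP2 × unitInterval := fun p => (Quot.mk _ p.1, p.2)

lemma qk_isQuotientMap : Topology.IsQuotientMap qk := by
  have hcont : Continuous qk := (continuous_quot_mk.comp continuous_fst).prodMk continuous_snd
  have hsurj : Function.Surjective qk := by
    rintro ⟨p, t⟩
    obtain ⟨v, rfl⟩ := Quot.exists_rep p
    exact ⟨(v, t), rfl⟩
  exact (hcont.isClosedMap).isQuotientMap hcont hsurj

def bigG : RP2 × unitInterval → XS := fun p =>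
  Quot.liftOn p.1 (fun v => Quot.mk _ (fMap v p.2))
    (fun v w hvw => Quot.sound (fMap_neg v w hvw p.2).symm)

lemma bigG_compat : ∀ a b : RP2 × unitInterval,
    ((a.2 = 0 ∧ b.2 = 0) ∨ (a.2 = 1 ∧ b.2 = 1)) → bigG a = bigG b := by
  rintro ⟨p, t⟩ ⟨q, s⟩ (⟨h1, h2⟩ | ⟨h1, h2⟩) <;>
  · dsimp only at h1 h2
    subst h1; subst h2
    obtain ⟨v, rfl⟩ := Quot.exists_rep p
    obtain ⟨w, rfl⟩ := Quot.exists_rep q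
    show (Quot.mk _ (fMap v _) : XS) = Quot.mk _ (fMap w _)
    rw [fMap_eq_of_rad_zero v w _ (by norm_num [rad])]

def suspG : Susp RP2 → XS := Quot.lift bigG bigG_compat

lemma suspG_cont : Continuous suspG := by
  apply continuous_quot_lift
  rw [qk_isQuotientMap.continuous_iff]
  show Continuous (fun p : S2 × unitInterval => (Quot.mk _ (fMap p.1 p.2) : XS))
  exact continuous_quot_mk.comp fMap_cont

lemma suspG_surj : Function.Surjective suspG := by
  intro x
  obtain ⟨z, rfl⟩ := Quot.exists_rep x
  have hsum := sum_sq_S3 z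
  rw [Fin.sum_univ_castSucc] at hsum
  rw [show (Fin.last 3 : Fin 4) = 3 from rfl] at hsum
  set s : ℝ := ∑ j : Fin 3, ((z : E4) j.castSucc)^2 with hs_def
  have hs_nonneg : 0 ≤ s := Finset.sum_nonneg fun j _ => sq_nonneg _
  have hz3_sq : ((z : E4) 3)^2 ≤ 1 := by nlinarith
  have hz3_le : (z : E4) 3 ≤ 1 := by nlinarith
  have hz3_ge : -1 ≤ (z : E4) 3 := by nlinarith
  set t : unitInterval := ⟨(1 - (z : E4) 3)/2, by constructor <;> [linarith; linarith]⟩ with ht_def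
  have htc : (t : ℝ) = (1 - (z : E4) 3)/2 := rfl
  have h12t : 1 - 2*(t:ℝ) = (z : E4) 3 := by rw [htc]; ring
  have hrad : rad t = Real.sqrt s := by
    rw [rad, h12t]
    congr 1
    nlinarith
  by_cases hs0 : s = 0
  · have hzj : ∀ j : Fin 3, (z : E4) j.castSucc = 0 := by
      intro j
      have h0 := (Finset.sum_eq_zero_iff_of_nonneg
          (f := fun j : Fin 3 => ((z : E4) j.castSucc)^2) (s := Finset.univ)
          (fun j _ => sq_nonneg _)).mp (hs_def ▸ hs0) j (Finset.mem_univ j)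
      exact pow_eq_zero_iff (n := 2) (by norm_num) |>.mp h0
    have v0 : S2 := ⟨EuclideanSpace.single 0 1, by
      rw [mem_sphere_zero_iff_norm, EuclideanSpace.norm_single, norm_one]⟩
    refine ⟨Quot.mk _ (Quot.mk _ v0, t), ?_⟩
    show (Quot.mk _ (fMap v0 t) : XS) = Quot.mk _ z
    congr 1
    apply Subtype.ext
    refine PiLp.ext fun i => ?_
    refine Fin.lastCases ?_ ?_ i
    · rw [fMap_last, h12t]; rfl
    · intro j
      rw [fMap_castSucc, hrad, hs0, Real.sqrt_zero, zero_mul, hzj j]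
  · have hspos : 0 < s := lt_of_le_of_ne hs_nonneg (Ne.symm hs0)
    have hsqrt_pos : 0 < Real.sqrt s := Real.sqrt_pos.mpr hspos
    set v : S2 := ⟨WithLp.toLp 2 (fun j : Fin 3 => (z : E4) j.castSucc / Real.sqrt s : Fin 3 → ℝ), by
      rw [mem_sphere_zero_iff_norm, EuclideanSpace.norm_eq, Real.sqrt_eq_one]
      have : ∀ j : Fin 3, ‖((fun j : Fin 3 => (z : E4) j.castSucc / Real.sqrt s : Fin 3 → ℝ)) j‖^2
          = ((z : E4) j.castSucc)^2 / s := by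
        intro j
        rw [Real.norm_eq_abs, sq_abs, div_pow, Real.sq_sqrt hs_nonneg]
      rw [Finset.sum_congr rfl fun j _ => this j, ← Finset.sum_div, ← hs_def,
        div_self hs0]⟩ with hv_def
    refine ⟨Quot.mk _ (Quot.mk _ v, t), ?_⟩
    show (Quot.mk _ (fMap v t) : XS) = Quot.mk _ z
    congr 1
    apply Subtype.ext
    refine PiLp.ext fun i => ?_
    refine Fin.lastCases ?_ ?_ i
    · rw [fMap_last, h12t]; rfl
    · intro j
      rw [fMap_castSucc, hrad]
      show Real.sqrt s * ((z : E4) j.castSucc / Real.sqrt s) = (z : E4) j.castSucc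
      field_simp

lemma suspG_inj : Function.Injective suspG := by
  intro a b h
  obtain ⟨⟨p, t⟩, rfl⟩ := Quot.exists_rep a
  obtain ⟨⟨q, s⟩, rfl⟩ := Quot.exists_rep b
  obtain ⟨v, rfl⟩ := Quot.exists_rep p
  obtain ⟨w, rfl⟩ := Quot.exists_rep q
  have h' : (Quot.mk _ (fMap v t) : XS) = Quot.mk _ (fMap w s) := h
  have hts : t = s := by
    rcases xs_eq h' with he | he
    · have h4 : (fMap v t : E4) (Fin.last 3) = (fMap w s : E4) (Fin.last 3) := by rw [he]
      rw [fMap_last, fMap_last] at h4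
      exact Subtype.ext (by linarith)
    · have h4 : (sphereInv (fMap v t) : E4) (Fin.last 3) = (fMap w s : E4) (Fin.last 3) := by
        rw [he]
      rw [sphereInv_coord, if_pos (show (Fin.last 3 : Fin 4) = 3 from rfl)] at h4
      rw [fMap_last, fMap_last] at h4
      exact Subtype.ext (by linarith)
  subst hts
  by_cases ht0 : (t : ℝ) = 0
  · exact Quot.sound (Or.inl ⟨Subtype.ext ht0, Subtype.ext ht0⟩)
  by_cases ht1 : (t : ℝ) = 1
  · exact Quot.sound (Or.inr ⟨Subtype.ext ht1, Subtype.ext ht1⟩)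
  have h01 : 0 < (t : ℝ) ∧ (t : ℝ) < 1 := by
    constructor
    · exact lt_of_le_of_ne t.2.1 (Ne.symm ht0)
    · exact lt_of_le_of_ne t.2.2 ht1
  have hrad_pos : 0 < rad t := by
    rw [rad]
    apply Real.sqrt_pos.mpr
    nlinarith [h01.1, h01.2]
  rcases xs_eq h' with he | he
  · have hvw : v = w := by
      apply Subtype.ext
      refine PiLp.ext fun j => ?_
      have h4 : (fMap v t : E4) j.castSucc = (fMap w t : E4) j.castSucc := by rw [he]
      rw [fMap_castSucc, fMap_castSucc] at h4
      exact mul_left_cancel₀ (ne_of_gt hrad_pos) h4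
    rw [hvw]
  · have hvw : (w : E3) = -(v : E3) := by
      refine PiLp.ext fun j => ?_
      have h4 : (sphereInv (fMap v t) : E4) j.castSucc = (fMap w t : E4) j.castSucc := by rw [he]
      rw [sphereInv_coord, if_neg (castSucc_ne_three j), fMap_castSucc, fMap_castSucc] at h4
      show (w : E3) j = -((v : E3) j)
      have := mul_left_cancel₀ (ne_of_gt hrad_pos) (show rad t * -((v : E3) j) = rad t * (w : E3) j by linarith)
      linarith [this]
    have : (Quot.mk _ v : RP2) = Quot.mk _ w := Quot.sound hvw
    rw [this]

end AuxXS

/-- The quotient `X_S = S³ / ι` is homeomorphic to the unreduced suspension of the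
real projective plane. -/
theorem XS_homeomorphic_susp_RP2 : Nonempty (XS ≃ₜ Susp RP2) := by
  have hbij : Function.Bijective suspG := ⟨suspG_inj, suspG_surj⟩
  exact ⟨(Continuous.homeoOfEquivCompactToT2 (f := Equiv.ofBijective suspG hbij) suspG_cont).symm⟩
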